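/- There is a unique involutive ring homomorphism x ↦ x̄ on B_{m,n}(q,t) which is ℚ-linear, semilinear with respect to the field involution of ℚ(q,t) sending q ↦ q⁻¹ and t ↦ t⁻¹, and satisfies H̄_i = H_i⁻¹ for every generator H_i and ē = e. -/

import Mathlib

open scoped Classical

noncomputable section

/-- The field `ℚ(q,t)` of rational functions in two indeterminates over `ℚ`. -/
abbrev KK : Type := FractionRing (MvPolynomial (Fin 2) ℚ)

/-- The indeterminate `q` viewed inside `ℚ(q,t)`. -/
def qv : KK := algebraMap (MvPolynomial (Fin 2) ℚ) KK (MvPolynomial.X 0)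

/-- The indeterminate `t` viewed inside `ℚ(q,t)`. -/
def tv : KK := algebraMap (MvPolynomial (Fin 2) ℚ) KK (MvPolynomial.X 1)

/-- The valid indices `i` for the generators `H i` of `B_{m,n}(q,t)`:
`1 ≤ i ≤ n - 1` or `1 ≤ -i ≤ m - 1`. -/
def validIdx (m n : ℕ) (i : ℤ) : Prop :=
  (1 ≤ i ∧ i ≤ (n : ℤ) - 1) ∨ (1 ≤ -i ∧ -i ≤ (m : ℤ) - 1)

/-- Generators of the quantized walled Brauer algebra `B_{m,n}(q,t)`. -/
inductive WBgen (m n : ℕ) : Type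
  | H (i : ℤ) (h : validIdx m n i) : WBgen m n
  | E : WBgen m n

/-- The generator `H i` in the free algebra. -/
def fH (m n : ℕ) (i : ℤ) (h : validIdx m n i) : FreeAlgebra KK (WBgen m n) :=
  FreeAlgebra.ι KK (WBgen.H i h)

/-- The generator `e` in the free algebra. -/
def fE (m n : ℕ) : FreeAlgebra KK (WBgen m n) := FreeAlgebra.ι KK WBgen.E

/-- The element `H i - (q - q⁻¹)`, which becomes the inverse of `H i` in the quotient. -/
def fHinv (m n : ℕ) (i : ℤ) (h : validIdx m n i) : FreeAlgebra KK (WBgen m n) :=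
  fH m n i h - algebraMap KK _ (qv - qv⁻¹)

/-- The defining relations of the quantized walled Brauer algebra `B_{m,n}(q,t)`. -/
inductive WBrel (m n : ℕ) :
    FreeAlgebra KK (WBgen m n) → FreeAlgebra KK (WBgen m n) → Prop
  | quad (i : ℤ) (h : validIdx m n i) :
      WBrel m n ((fH m n i h - algebraMap KK _ qv) * (fH m n i h + algebraMap KK _ qv⁻¹)) 0
  | comm (i : ℤ) (hi : validIdx m n i) (j : ℤ) (hj : validIdx m n j) (hij : 1 < |i - j|) :
      WBrel m n (fH m n i hi * fH m n j hj) (fH m n j hj * fH m n i hi)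
  | braid (i : ℤ) (hi : validIdx m n i) (hi1 : validIdx m n (i + 1)) :
      WBrel m n (fH m n i hi * fH m n (i + 1) hi1 * fH m n i hi)
        (fH m n (i + 1) hi1 * fH m n i hi * fH m n (i + 1) hi1)
  | commE (i : ℤ) (hi : validIdx m n i) (h2 : 2 ≤ |i|) :
      WBrel m n (fH m n i hi * fE m n) (fE m n * fH m n i hi)
  | eHe (i : ℤ) (hi : validIdx m n i) (h : i = 1 ∨ i = -1) :
      WBrel m n (fE m n * fH m n i hi * fE m n) (algebraMap KK _ tv * fE m n)
  | esq : WBrel m n (fE m n * fE m n)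
      (algebraMap KK _ ((tv - tv⁻¹) / (qv - qv⁻¹)) * fE m n)
  | rel7 (h1 : validIdx m n 1) (hm : validIdx m n (-1)) :
      WBrel m n (fE m n * fHinv m n (-1) hm * fH m n 1 h1 * fE m n * fH m n (-1) hm)
        (fE m n * fHinv m n (-1) hm * fH m n 1 h1 * fE m n * fH m n 1 h1)
  | rel8 (h1 : validIdx m n 1) (hm : validIdx m n (-1)) :
      WBrel m n (fH m n (-1) hm * fE m n * fHinv m n (-1) hm * fH m n 1 h1 * fE m n)
        (fH m n 1 h1 * fE m n * fHinv m n (-1) hm * fH m n 1 h1 * fE m n)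

/-- The quantized walled Brauer algebra `B_{m,n}(q,t)`. -/
abbrev WB (m n : ℕ) : Type := RingQuot (WBrel m n)

/-- The generator `H i` of `B_{m,n}(q,t)`. -/
def HB (m n : ℕ) (i : ℤ) (h : validIdx m n i) : WB m n :=
  RingQuot.mkAlgHom KK (WBrel m n) (fH m n i h)

/-- The generator `e` of `B_{m,n}(q,t)`. -/
def EB (m n : ℕ) : WB m n := RingQuot.mkAlgHom KK (WBrel m n) (fE m n)

/-- The inverse `H i⁻¹ = H i - (q - q⁻¹)` of the generator `H i`. -/
def HBinv (m n : ℕ) (i : ℤ) (h : validIdx m n i) : WB m n :=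
  HB m n i h - algebraMap KK _ (qv - qv⁻¹)

/-- Total version of `H i` (equal to `H i` for valid `i`, junk value `1` otherwise). -/
def Htil (m n : ℕ) (i : ℤ) : WB m n :=
  if h : validIdx m n i then HB m n i h else 1

/-- Total version of `H i⁻¹` (equal to `H i⁻¹` for valid `i`, junk value `1` otherwise). -/
def Htilinv (m n : ℕ) (i : ℤ) : WB m n :=
  if h : validIdx m n i then HBinv m n i h else 1

/-- The elements `e_k`:  `e_0 = 1`, `e_1 = e`, and
`e_{k+1} = e ⬝ H_{-1}⁻¹ H_{-2}⁻¹ ⋯ H_{-k}⁻¹ ⬝ H_1 H_2 ⋯ H_k ⬝ e_k`. -/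
def ek (m n : ℕ) : ℕ → WB m n
  | 0 => 1
  | k + 1 =>
      EB m n *
        (((List.range k).map (fun j => Htilinv m n (-((j + 1 : ℕ) : ℤ)))).prod) *
        (((List.range k).map (fun j => Htil m n ((j + 1 : ℕ) : ℤ))).prod) *
        ek m n k

/-! ### Auxiliary lemmas for the bar involution -/

section BarAux

lemma qv_ne_zero : qv ≠ 0 := by
  rw [qv, map_ne_zero_iff _ (IsFractionRing.injective (MvPolynomial (Fin 2) ℚ) KK)]
  exact MvPolynomial.X_ne_zero 0

lemma qq_ne : qv - qv⁻¹ ≠ 0 := by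
  intro h
  have hq : qv = qv⁻¹ := sub_eq_zero.mp h
  have h1 : qv * qv = 1 := by
    nth_rewrite 2 [hq]
    exact mul_inv_cancel₀ qv_ne_zero
  have h2 : algebraMap (MvPolynomial (Fin 2) ℚ) KK (MvPolynomial.X 0 * MvPolynomial.X 0) =
      algebraMap (MvPolynomial (Fin 2) ℚ) KK 1 := by
    rw [map_mul, map_one]; exact h1
  have h3 := IsFractionRing.injective (MvPolynomial (Fin 2) ℚ) KK h2
  have h4 := congrArg (MvPolynomial.eval (fun _ : Fin 2 => (0:ℚ))) h3
  simp at h4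

variable {σ : KK →+* KK}

lemma sigma_qinv (hσq : σ qv = qv⁻¹) : σ qv⁻¹ = qv := by rw [map_inv₀, hσq, inv_inv]

lemma sigma_tinv (hσt : σ tv = tv⁻¹) : σ tv⁻¹ = tv := by rw [map_inv₀, hσt, inv_inv]

lemma sigma_d (hσq : σ qv = qv⁻¹) : σ (qv - qv⁻¹) = qv⁻¹ - qv := by
  rw [map_sub, hσq, sigma_qinv hσq]

lemma sigma_delta (hσq : σ qv = qv⁻¹) (hσt : σ tv = tv⁻¹) :
    σ ((tv - tv⁻¹) / (qv - qv⁻¹)) = (tv - tv⁻¹) / (qv - qv⁻¹) := by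
  rw [map_div₀, map_sub, map_sub, hσq, hσt, sigma_qinv hσq, sigma_tinv hσt,
    ← neg_sub tv tv⁻¹, ← neg_sub qv qv⁻¹, neg_div_neg_eq]

lemma sigma_invol (hσq : σ qv = qv⁻¹) (hσt : σ tv = tv⁻¹) (c : KK) : σ (σ c) = c := by
  have h : σ.comp σ = RingHom.id KK := by
    apply IsLocalization.ringHom_ext (nonZeroDivisors (MvPolynomial (Fin 2) ℚ))
    apply MvPolynomial.ringHom_ext
    · intro r
      have h1 : (algebraMap (MvPolynomial (Fin 2) ℚ) KK) (MvPolynomial.C r) = (r : KK) :=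
        eq_ratCast ((algebraMap (MvPolynomial (Fin 2) ℚ) KK).comp MvPolynomial.C) r
      simp only [RingHom.comp_apply, RingHom.id_apply, h1, map_ratCast]
    · intro i
      fin_cases i
      · simp only [RingHom.comp_apply, RingHom.id_apply]
        show σ (σ qv) = qv
        rw [hσq, sigma_qinv hσq]
      · simp only [RingHom.comp_apply, RingHom.id_apply]
        show σ (σ tv) = tv
        rw [hσt, sigma_tinv hσt]
  exact RingHom.congr_fun h c

/-! ### Generic ring lemmas -/

section Generic
variable {R : Type*} [Ring R]

lemma braid_inv {R : Type*} [Monoid R] {a b a' b' : R}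
    (ha : a * a' = 1) (ha' : a' * a = 1) (hb : b * b' = 1) (hb' : b' * b = 1)
    (h : a * b * a = b * a * b) : a' * b' * a' = b' * a' * b' := by
  let ua : Rˣ := ⟨a, a', ha, ha'⟩
  let ub : Rˣ := ⟨b, b', hb, hb'⟩
  have h2 : ua * ub * ua = ub * ua * ub := Units.ext h
  have h3 := congrArg (fun u : Rˣ => ((u⁻¹ : Rˣ) : R)) h2
  simp only [mul_inv_rev, Units.val_mul] at h3
  simpa [ua, ub, mul_assoc] using h3

lemma comm_mul_inv {R : Type*} [Monoid R] {a b b' : R}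
    (hbb' : b * b' = 1) (hb'b : b' * b = 1) (hab : a * b = b * a) : a * b' = b' * a := by
  calc a * b' = (b' * b) * (a * b') := by rw [hb'b, one_mul]
  _ = b' * ((b * a) * b') := by simp only [mul_assoc]
  _ = b' * ((a * b) * b') := by rw [hab]
  _ = (b' * a) * (b * b') := by simp only [mul_assoc]
  _ = b' * a := by rw [hbb', mul_one]

lemma rel7_bar_aux {R : Type*} [Monoid R] {a b a' b' X : R}
    (haa' : a * a' = 1) (hbb' : b * b' = 1)
    (hab' : a * b' = b' * a) (h : X * a = X * b) : X * a' = X * b' := by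
  calc X * a' = X * (b * b') * a' := by rw [hbb', mul_one]
  _ = X * b * (b' * a') := by simp only [mul_assoc]
  _ = X * a * (b' * a') := by rw [← h]
  _ = X * (a * b') * a' := by simp only [mul_assoc]
  _ = X * (b' * a) * a' := by rw [hab']
  _ = X * b' * (a * a') := by simp only [mul_assoc]
  _ = X * b' := by rw [haa', mul_one]

lemma rel8_bar_aux {R : Type*} [Monoid R] {a b a' b' X : R}
    (ha'a : a' * a = 1) (hb'b : b' * b = 1)
    (hab' : a * b' = b' * a) (h : a * X = b * X) : a' * X = b' * X := by
  calc a' * X = a' * ((b' * b) * X) := by rw [hb'b, one_mul]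
  _ = (a' * b') * (b * X) := by simp only [mul_assoc]
  _ = (a' * b') * (a * X) := by rw [← h]
  _ = a' * ((b' * a) * X) := by simp only [mul_assoc]
  _ = a' * ((a * b') * X) := by rw [hab']
  _ = (a' * a) * (b' * X) := by simp only [mul_assoc]
  _ = b' * X := by rw [ha'a, one_mul]

lemma quad_sq {H Q Q' D : R} (hq : (H - Q) * (H + Q') = 0) (hc : H * Q' = Q' * H)
    (hQQ' : Q * Q' = 1) (hD : D = Q - Q') : H * H = D * H + 1 := by
  have e1 : (H - Q) * (H + Q') = H * H - (Q - Q') * H - 1 := by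
    rw [sub_mul, mul_add, mul_add, hc, hQQ', sub_mul]
    abel
  have e2 : H * H - (Q - Q') * H - 1 = 0 := by rw [← e1, hq]
  rw [sub_sub] at e2
  rw [hD]
  exact sub_eq_zero.mp e2

lemma mul_inv_abs {H D : R} (hsq : H * H = D * H + 1) (hc : H * D = D * H) :
    H * (H - D) = 1 := by
  rw [mul_sub, hsq, hc]
  abel

lemma inv_mul_abs {H D : R} (hsq : H * H = D * H + 1) : (H - D) * H = 1 := by
  rw [sub_mul, hsq]
  abel

lemma quadbar_abs {H Q Q' D : R} (hq : (H - Q) * (H + Q') = 0) (hD : D = Q - Q') :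
    (H - D - Q') * (H - D + Q) = 0 := by
  have h1 : H - D - Q' = H - Q := by rw [hD]; abel
  have h2 : H - D + Q = H + Q' := by rw [hD]; abel
  rw [h1, h2]
  exact hq

lemma comm_abs {a b D : R} (h : a * b = b * a) (hDa : D * a = a * D) (hDb : D * b = b * D) :
    (a - D) * (b - D) = (b - D) * (a - D) := by
  simp only [sub_mul, mul_sub]
  rw [h, hDa, hDb]
  abel

lemma commE_abs {a e D : R} (h : a * e = e * a) (hD : D * e = e * D) :
    (a - D) * e = e * (a - D) := by
  rw [sub_mul, mul_sub, h, hD]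

lemma eHe_abs {e H D T W V : R} (h1 : e * H * e = T * e) (h2 : e * e = W * e)
    (hDe : e * D = D * e) (hkey : D * W = T - V) : e * (H - D) * e = V * e := by
  have e0 : e * (H - D) * e = e * H * e - e * D * e := by rw [mul_sub, sub_mul]
  have e3 : e * D * e = D * (W * e) := by rw [hDe, mul_assoc, h2]
  rw [e0, h1, e3, ← mul_assoc, hkey, sub_mul]
  abel

lemma invinv_abs {H D D' : R} (h : D' = -D) : H - D - D' = H := by
  rw [h]; abel

lemma stepA_abs {e a b D T : R} (hD : ∀ x : R, D * x = x * D)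
    (ha : e * a * e = T * e) (hb : e * b * e = T * e) :
    e * a * (b - D) * e = e * (a - D) * b * e := by
  have L : e * a * (b - D) * e = e * a * b * e - D * (T * e) := by
    rw [mul_sub, sub_mul]
    congr 1
    calc e * a * D * e = D * (e * a) * e := by rw [← hD (e * a)]
    _ = D * (e * a * e) := by rw [mul_assoc]
    _ = D * (T * e) := by rw [ha]
  have Rr : e * (a - D) * b * e = e * a * b * e - D * (T * e) := by
    rw [mul_sub, sub_mul, sub_mul]
    congr 1
    calc e * D * b * e = D * e * b * e := by rw [← hD e]
    _ = D * (e * b * e) := by simp only [mul_assoc]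
    _ = D * (T * e) := by rw [hb]
  rw [L, Rr]

end Generic

/-! ### Relations in `WB m n` -/

variable (m n : ℕ)

lemma quadWB (i : ℤ) (h : validIdx m n i) :
    (HB m n i h - algebraMap KK (WB m n) qv) * (HB m n i h + algebraMap KK (WB m n) qv⁻¹) = 0 := by
  have h0 := RingQuot.mkAlgHom_rel KK (WBrel.quad (m := m) (n := n) i h)
  simpa [HB, map_mul, map_sub, map_add, map_zero, AlgHom.commutes] using h0

lemma commWB (i : ℤ) (hi : validIdx m n i) (j : ℤ) (hj : validIdx m n j) (hij : 1 < |i - j|) :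
    HB m n i hi * HB m n j hj = HB m n j hj * HB m n i hi := by
  have h0 := RingQuot.mkAlgHom_rel KK (WBrel.comm (m := m) (n := n) i hi j hj hij)
  simpa [HB, map_mul] using h0

lemma braidWB (i : ℤ) (hi : validIdx m n i) (hi1 : validIdx m n (i + 1)) :
    HB m n i hi * HB m n (i + 1) hi1 * HB m n i hi
      = HB m n (i + 1) hi1 * HB m n i hi * HB m n (i + 1) hi1 := by
  have h0 := RingQuot.mkAlgHom_rel KK (WBrel.braid (m := m) (n := n) i hi hi1)
  simpa [HB, map_mul] using h0

lemma commEWB (i : ℤ) (hi : validIdx m n i) (h2 : 2 ≤ |i|) :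
    HB m n i hi * EB m n = EB m n * HB m n i hi := by
  have h0 := RingQuot.mkAlgHom_rel KK (WBrel.commE (m := m) (n := n) i hi h2)
  simpa [HB, EB, map_mul] using h0

lemma eHeWB (i : ℤ) (hi : validIdx m n i) (h : i = 1 ∨ i = -1) :
    EB m n * HB m n i hi * EB m n = algebraMap KK (WB m n) tv * EB m n := by
  have h0 := RingQuot.mkAlgHom_rel KK (WBrel.eHe (m := m) (n := n) i hi h)
  simpa [HB, EB, map_mul, AlgHom.commutes] using h0

lemma esqWB :
    EB m n * EB m n = algebraMap KK (WB m n) ((tv - tv⁻¹) / (qv - qv⁻¹)) * EB m n := by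
  have h0 := RingQuot.mkAlgHom_rel KK (WBrel.esq (m := m) (n := n))
  simpa [EB, map_mul, AlgHom.commutes] using h0

lemma mkAlgHom_fHinv (i : ℤ) (h : validIdx m n i) :
    RingQuot.mkAlgHom KK (WBrel m n) (fHinv m n i h) = HBinv m n i h := by
  simp [fHinv, HBinv, HB, map_sub, AlgHom.commutes]

lemma rel7WB (h1 : validIdx m n 1) (hm : validIdx m n (-1)) :
    EB m n * HBinv m n (-1) hm * HB m n 1 h1 * EB m n * HB m n (-1) hm
      = EB m n * HBinv m n (-1) hm * HB m n 1 h1 * EB m n * HB m n 1 h1 := by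
  have h0 := RingQuot.mkAlgHom_rel KK (WBrel.rel7 (m := m) (n := n) h1 hm)
  simpa [HB, EB, map_mul, mkAlgHom_fHinv] using h0

lemma rel8WB (h1 : validIdx m n 1) (hm : validIdx m n (-1)) :
    HB m n (-1) hm * EB m n * HBinv m n (-1) hm * HB m n 1 h1 * EB m n
      = HB m n 1 h1 * EB m n * HBinv m n (-1) hm * HB m n 1 h1 * EB m n := by
  have h0 := RingQuot.mkAlgHom_rel KK (WBrel.rel8 (m := m) (n := n) h1 hm)
  simpa [HB, EB, map_mul, mkAlgHom_fHinv] using h0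

lemma HB_sq (i : ℤ) (h : validIdx m n i) :
    HB m n i h * HB m n i h
      = algebraMap KK (WB m n) (qv - qv⁻¹) * HB m n i h + 1 := by
  refine quad_sq (H := HB m n i h) (Q := algebraMap KK (WB m n) qv)
    (Q' := algebraMap KK (WB m n) qv⁻¹) (D := algebraMap KK (WB m n) (qv - qv⁻¹))
    (quadWB m n i h) ((Algebra.commutes qv⁻¹ (HB m n i h)).symm) ?_ (by rw [map_sub])
  rw [← map_mul, mul_inv_cancel₀ qv_ne_zero, map_one]

lemma HB_mul_HBinv (i : ℤ) (h : validIdx m n i) :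
    HB m n i h * HBinv m n i h = 1 :=
  mul_inv_abs (H := HB m n i h) (D := algebraMap KK (WB m n) (qv - qv⁻¹))
    (HB_sq m n i h) ((Algebra.commutes (qv - qv⁻¹) (HB m n i h)).symm)

lemma HBinv_mul_HB (i : ℤ) (h : validIdx m n i) :
    HBinv m n i h * HB m n i h = 1 :=
  inv_mul_abs (H := HB m n i h) (D := algebraMap KK (WB m n) (qv - qv⁻¹)) (HB_sq m n i h)

lemma quadbar (i : ℤ) (h : validIdx m n i) :
    (HBinv m n i h - algebraMap KK (WB m n) qv⁻¹) * (HBinv m n i h + algebraMap KK (WB m n) qv)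
      = 0 :=
  quadbar_abs (H := HB m n i h) (Q := algebraMap KK (WB m n) qv)
    (Q' := algebraMap KK (WB m n) qv⁻¹) (D := algebraMap KK (WB m n) (qv - qv⁻¹))
    (quadWB m n i h) (by rw [map_sub])

lemma eHebar (i : ℤ) (hi : validIdx m n i) (h : i = 1 ∨ i = -1) :
    EB m n * HBinv m n i hi * EB m n = algebraMap KK (WB m n) tv⁻¹ * EB m n := by
  refine eHe_abs (e := EB m n) (H := HB m n i hi)
    (D := algebraMap KK (WB m n) (qv - qv⁻¹)) (T := algebraMap KK (WB m n) tv)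
    (W := algebraMap KK (WB m n) ((tv - tv⁻¹) / (qv - qv⁻¹)))
    (V := algebraMap KK (WB m n) tv⁻¹)
    (eHeWB m n i hi h) (esqWB m n)
    ((Algebra.commutes (qv - qv⁻¹) (EB m n)).symm) ?_
  calc algebraMap KK (WB m n) (qv - qv⁻¹)
        * algebraMap KK (WB m n) ((tv - tv⁻¹) / (qv - qv⁻¹))
      = algebraMap KK (WB m n) ((qv - qv⁻¹) * ((tv - tv⁻¹) / (qv - qv⁻¹))) :=
        (map_mul _ _ _).symm
  _ = algebraMap KK (WB m n) (tv - tv⁻¹) := by rw [mul_comm, div_mul_cancel₀ _ qq_ne]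
  _ = algebraMap KK (WB m n) tv - algebraMap KK (WB m n) tv⁻¹ := by rw [map_sub]

lemma negD :
    algebraMap KK (WB m n) (qv⁻¹ - qv) = -algebraMap KK (WB m n) (qv - qv⁻¹) := by
  calc algebraMap KK (WB m n) (qv⁻¹ - qv)
      = algebraMap KK (WB m n) (-(qv - qv⁻¹)) := by rw [neg_sub]
  _ = -algebraMap KK (WB m n) (qv - qv⁻¹) := by rw [map_neg]

end BarAux

section BarConstruction

variable (m n : ℕ) (σ : KK →+* KK)

/-- Auxiliary step: `e ⬝ H₋₁ ⬝ H₁⁻¹ ⬝ e = e ⬝ H₋₁⁻¹ ⬝ H₁ ⬝ e`. -/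
lemma stepA (h1 : validIdx m n 1) (hm : validIdx m n (-1)) :
    EB m n * HB m n (-1) hm * HBinv m n 1 h1 * EB m n
      = EB m n * HBinv m n (-1) hm * HB m n 1 h1 * EB m n :=
  stepA_abs (e := EB m n) (a := HB m n (-1) hm) (b := HB m n 1 h1)
    (D := algebraMap KK (WB m n) (qv - qv⁻¹)) (T := algebraMap KK (WB m n) tv)
    (fun x => Algebra.commutes (qv - qv⁻¹) x)
    (eHeWB m n (-1) hm (Or.inr rfl)) (eHeWB m n 1 h1 (Or.inl rfl))

/-- Image of a generator under the bar involution. -/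
def barGen : WBgen m n → WB m n
  | WBgen.H i h => HBinv m n i h
  | WBgen.E => EB m n

/-- The `σ`-semilinear ring homomorphism from the free algebra to `WB m n`
sending `H i ↦ H i⁻¹` and `e ↦ e`. -/
lemma central (c : KK) (x : WB m n) :
    ((algebraMap KK (WB m n)).comp σ) c * x = x * ((algebraMap KK (WB m n)).comp σ) c :=
  Algebra.commutes (σ c) x

/-- The canonical `KK`-algebra structure on `WB m n` twisted by `σ`. -/
def twistedAlg : Algebra KK (WB m n) :=
  RingHom.toAlgebra' ((algebraMap KK (WB m n)).comp σ) (central m n σ)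

/-- The `σ`-semilinear ring homomorphism from the free algebra to `WB m n`
sending `H i ↦ H i⁻¹` and `e ↦ e`. -/
def FbarA : FreeAlgebra KK (WBgen m n) →+* WB m n :=
  @AlgHom.toRingHom KK (FreeAlgebra KK (WBgen m n)) (WB m n) _ _ _ _ (twistedAlg m n σ)
    (@FreeAlgebra.lift KK (WBgen m n) _ (WB m n) _ (twistedAlg m n σ) (barGen m n))

lemma FbarA_ι (g : WBgen m n) : FbarA m n σ (FreeAlgebra.ι KK g) = barGen m n g :=
  @FreeAlgebra.lift_ι_apply KK (WBgen m n) _ (WB m n) _ (twistedAlg m n σ) (barGen m n) g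

lemma FbarA_fH (i : ℤ) (h : validIdx m n i) :
    FbarA m n σ (fH m n i h) = HBinv m n i h := FbarA_ι m n σ _

lemma FbarA_fE : FbarA m n σ (fE m n) = EB m n := FbarA_ι m n σ _

lemma FbarA_alg (c : KK) :
    FbarA m n σ (algebraMap KK (FreeAlgebra KK (WBgen m n)) c)
      = algebraMap KK (WB m n) (σ c) := by
  have h := @AlgHom.commutes KK (FreeAlgebra KK (WBgen m n)) (WB m n) _ _ _ _
    (twistedAlg m n σ)
    (@FreeAlgebra.lift KK (WBgen m n) _ (WB m n) _ (twistedAlg m n σ) (barGen m n)) c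
  exact h.trans (RingHom.congr_fun
    (RingHom.algebraMap_toAlgebra' ((algebraMap KK (WB m n)).comp σ) (central m n σ)) c)

variable {σ}

lemma FbarA_fHinv (hσq : σ qv = qv⁻¹) (i : ℤ) (h : validIdx m n i) :
    FbarA m n σ (fHinv m n i h) = HB m n i h := by
  have h1 : FbarA m n σ (fHinv m n i h)
      = FbarA m n σ (fH m n i h)
        - FbarA m n σ (algebraMap KK (FreeAlgebra KK (WBgen m n)) (qv - qv⁻¹)) := by
    exact map_sub (FbarA m n σ) (fH m n i h)
      (algebraMap KK (FreeAlgebra KK (WBgen m n)) (qv - qv⁻¹))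
  rw [h1, FbarA_fH, FbarA_alg, sigma_d hσq]
  rw [negD m n, HBinv]; abel

lemma FbarA_rel (hσq : σ qv = qv⁻¹) (hσt : σ tv = tv⁻¹) :
    ∀ ⦃x y⦄, WBrel m n x y → FbarA m n σ x = FbarA m n σ y := by
  intro x y hr
  induction hr with
  | quad i h =>
      simp only [map_mul, map_sub, map_add, map_zero, FbarA_fH, FbarA_alg, hσq,
        sigma_qinv hσq]
      exact quadbar m n i h
  | comm i hi j hj hij =>
      simp only [map_mul, FbarA_fH]
      exact comm_abs (a := HB m n i hi) (b := HB m n j hj)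
        (D := algebraMap KK (WB m n) (qv - qv⁻¹)) (commWB m n i hi j hj hij)
        (Algebra.commutes (qv - qv⁻¹) (HB m n i hi))
        (Algebra.commutes (qv - qv⁻¹) (HB m n j hj))
  | braid i hi hi1 =>
      simp only [map_mul, FbarA_fH]
      exact braid_inv (HB_mul_HBinv m n i hi) (HBinv_mul_HB m n i hi)
        (HB_mul_HBinv m n (i+1) hi1) (HBinv_mul_HB m n (i+1) hi1) (braidWB m n i hi hi1)
  | commE i hi h2 =>
      simp only [map_mul, FbarA_fH, FbarA_fE]
      exact commE_abs (a := HB m n i hi) (e := EB m n)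
        (D := algebraMap KK (WB m n) (qv - qv⁻¹)) (commEWB m n i hi h2)
        (Algebra.commutes (qv - qv⁻¹) (EB m n))
  | eHe i hi h =>
      simp only [map_mul, FbarA_fH, FbarA_fE, FbarA_alg, hσt]
      exact eHebar m n i hi h
  | esq =>
      simp only [map_mul, FbarA_fE, FbarA_alg, sigma_delta hσq hσt]
      exact esqWB m n
  | rel7 h1 hmm =>
      simp only [map_mul, FbarA_fH, FbarA_fE, FbarA_fHinv m n hσq]
      rw [stepA m n h1 hmm]
      exact rel7_bar_aux (HB_mul_HBinv m n (-1) hmm) (HB_mul_HBinv m n 1 h1)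
        (comm_mul_inv (HB_mul_HBinv m n 1 h1) (HBinv_mul_HB m n 1 h1)
          (commWB m n (-1) hmm 1 h1 (by norm_num)))
        (rel7WB m n h1 hmm)
  | rel8 h1 hmm =>
      simp only [map_mul, FbarA_fH, FbarA_fE, FbarA_fHinv m n hσq]
      have stepA' : EB m n * (HB m n (-1) hmm * (HBinv m n 1 h1 * EB m n))
          = EB m n * (HBinv m n (-1) hmm * (HB m n 1 h1 * EB m n)) := by
        have h := stepA m n h1 hmm
        simpa only [mul_assoc] using h
      have r8' : HB m n (-1) hmm * (EB m n * (HBinv m n (-1) hmm * (HB m n 1 h1 * EB m n)))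
          = HB m n 1 h1 * (EB m n * (HBinv m n (-1) hmm * (HB m n 1 h1 * EB m n))) := by
        have h := rel8WB m n h1 hmm
        simpa only [mul_assoc] using h
      simp only [mul_assoc]
      rw [stepA']
      exact rel8_bar_aux (HBinv_mul_HB m n (-1) hmm) (HBinv_mul_HB m n 1 h1)
        (comm_mul_inv (HB_mul_HBinv m n 1 h1) (HBinv_mul_HB m n 1 h1)
          (commWB m n (-1) hmm 1 h1 (by norm_num)))
        r8'

/-- The bar involution on `WB m n`. -/
def barHom (hσq : σ qv = qv⁻¹) (hσt : σ tv = tv⁻¹) : WB m n →+* WB m n :=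
  RingQuot.lift ⟨FbarA m n σ, FbarA_rel m n hσq hσt⟩

lemma mkRingHom_fH (i : ℤ) (h : validIdx m n i) :
    RingQuot.mkRingHom (WBrel m n) (fH m n i h) = HB m n i h := by
  rw [HB]
  exact (DFunLike.congr_fun (RingQuot.mkAlgHom_coe KK (WBrel m n)) (fH m n i h)).symm

lemma mkRingHom_fE :
    RingQuot.mkRingHom (WBrel m n) (fE m n) = EB m n := by
  rw [EB]
  exact (DFunLike.congr_fun (RingQuot.mkAlgHom_coe KK (WBrel m n)) (fE m n)).symm

lemma mkRingHom_alg (c : KK) :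
    RingQuot.mkRingHom (WBrel m n) (algebraMap KK (FreeAlgebra KK (WBgen m n)) c)
      = algebraMap KK (WB m n) c := by
  calc RingQuot.mkRingHom (WBrel m n) (algebraMap KK (FreeAlgebra KK (WBgen m n)) c)
      = RingQuot.mkAlgHom KK (WBrel m n) (algebraMap KK (FreeAlgebra KK (WBgen m n)) c) :=
        (DFunLike.congr_fun (RingQuot.mkAlgHom_coe KK (WBrel m n)) _).symm
  _ = algebraMap KK (WB m n) c := (RingQuot.mkAlgHom KK (WBrel m n)).commutes c

variable (hσq : σ qv = qv⁻¹) (hσt : σ tv = tv⁻¹)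

lemma barHom_mk (x : FreeAlgebra KK (WBgen m n)) :
    barHom m n hσq hσt (RingQuot.mkRingHom (WBrel m n) x) = FbarA m n σ x := by
  rw [barHom]
  exact RingQuot.lift_mkRingHom_apply _ _ _

lemma barHom_HB (i : ℤ) (h : validIdx m n i) :
    barHom m n hσq hσt (HB m n i h) = HBinv m n i h := by
  rw [← mkRingHom_fH, barHom_mk, FbarA_fH]

lemma barHom_EB : barHom m n hσq hσt (EB m n) = EB m n := by
  rw [← mkRingHom_fE, barHom_mk, FbarA_fE]
  exact (mkRingHom_fE m n).symm

lemma barHom_alg (c : KK) :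
    barHom m n hσq hσt (algebraMap KK (WB m n) c) = algebraMap KK (WB m n) (σ c) := by
  rw [← mkRingHom_alg, barHom_mk, FbarA_alg]

lemma barHom_HBinv (i : ℤ) (h : validIdx m n i) :
    barHom m n hσq hσt (HBinv m n i h) = HB m n i h := by
  have h1 : barHom m n hσq hσt (HBinv m n i h)
      = barHom m n hσq hσt (HB m n i h)
        - barHom m n hσq hσt (algebraMap KK (WB m n) (qv - qv⁻¹)) := by
    exact map_sub (barHom m n hσq hσt) (HB m n i h) (algebraMap KK (WB m n) (qv - qv⁻¹))
  rw [h1, barHom_HB, barHom_alg, sigma_d hσq]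
  rw [negD m n, HBinv]; abel

lemma barHom_invol (x : WB m n) :
    barHom m n hσq hσt (barHom m n hσq hσt x) = x := by
  obtain ⟨y, rfl⟩ := RingQuot.mkRingHom_surjective (WBrel m n) x
  induction y using FreeAlgebra.induction with
  | grade0 c =>
      rw [mkRingHom_alg, barHom_alg, barHom_alg, sigma_invol hσq hσt]
  | grade1 g =>
      cases g with
      | H i h =>
          rw [show FreeAlgebra.ι KK (WBgen.H i h) = fH m n i h from rfl,
            mkRingHom_fH, barHom_HB, barHom_HBinv]
      | E =>
          rw [show FreeAlgebra.ι KK (WBgen.E : WBgen m n) = fE m n from rfl,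
            mkRingHom_fE, barHom_EB, barHom_EB]
  | mul a b ha hb =>
      rw [map_mul, map_mul, map_mul, ha, hb]
  | add a b ha hb =>
      rw [map_add, map_add, map_add, ha, hb]

end BarConstruction


/-- Given the bar involution `σ` on `ℚ(q,t)` (the field endomorphism with `q ↦ q⁻¹`,
`t ↦ t⁻¹`), there is a unique involutive ring homomorphism on `B_{m,n}(q,t)` which is
`σ`-semilinear and satisfies `H̄ᵢ = Hᵢ⁻¹ = Hᵢ - (q - q⁻¹)` and `ē = e`. -/
theorem bar_involution_exists_unique (m n : ℕ) (hm : 1 ≤ m) (hn : 1 ≤ n)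
    (σ : KK →+* KK) (hσq : σ qv = qv⁻¹) (hσt : σ tv = tv⁻¹) :
    ∃! f : WB m n →+* WB m n,
      (∀ x, f (f x) = x) ∧
      (∀ c : KK, f (algebraMap KK (WB m n) c) = algebraMap KK (WB m n) (σ c)) ∧
      (∀ (i : ℤ) (h : validIdx m n i), f (HB m n i h) = HBinv m n i h) ∧
      f (EB m n) = EB m n := by
  refine ⟨barHom m n hσq hσt,
    ⟨barHom_invol m n hσq hσt, barHom_alg m n hσq hσt, barHom_HB m n hσq hσt,
      barHom_EB m n hσq hσt⟩, ?_⟩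
  rintro f ⟨hinv, halg, hH, hE⟩
  apply RingHom.ext
  intro x
  obtain ⟨y, rfl⟩ := RingQuot.mkRingHom_surjective (WBrel m n) x
  induction y using FreeAlgebra.induction with
  | grade0 c => rw [mkRingHom_alg, halg, barHom_alg]
  | grade1 g =>
      cases g with
      | H i h =>
          rw [show FreeAlgebra.ι KK (WBgen.H i h) = fH m n i h from rfl,
            mkRingHom_fH, hH, barHom_HB]
      | E =>
          rw [show FreeAlgebra.ι KK (WBgen.E : WBgen m n) = fE m n from rfl,
            mkRingHom_fE, hE, barHom_EB]
  | mul a b ha hb => rw [map_mul, map_mul, map_mul, ha, hb]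
  | add a b ha hb => rw [map_add, map_add, map_add, ha, hb]


end
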